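/- Let a(z), b(z) be local logarithmic fields on W (with a also local with itself). Then for all n ∈ ℤ: (i) (D_z a)_{(n)} b = −n · a_{(n−1)} b; (ii) D_z (a_{(n)} b) = (D_z a)_{(n)} b + a_{(n)} (D_z b); (iii) ∂_ℓ (a_{(n)} b) = (∂_ℓ a)_{(n)} b + a_{(n)} (∂_ℓ b). -/
import Mathlib


variable {W : Type*} [AddCommGroup W] [Module ℂ W]

variable (W) in
/-- The data of a logarithmic field `a(z) = Σ_μ Σ_j a_{μ,j} z^{−μ} ℓ^j` on `W`, recorded
pointwise: the value at `(μ, j, w)` is the coefficient of `z^{−μ} ℓ^j` applied to `w`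
(here `ℓ` plays the role of `log z`). -/
abbrev LogFieldData : Type _ := ℂ → ℕ → W → W

/-- `a` is a logarithmic field: its coefficients are linear, it is polynomial in `ℓ`, its
`z`-exponents lie in finitely many cosets of `ℤ` in `ℂ`, and for each vector `w` and each
coset the coefficients `a_{α+k,·}` annihilate `w` for all sufficiently large `k`. -/
def IsLogField (a : LogFieldData W) : Prop :=
  (∀ (μ : ℂ) (j : ℕ), IsLinearMap ℂ (a μ j)) ∧
  (∀ μ : ℂ, ∃ J : ℕ, ∀ j : ℕ, J ≤ j → a μ j = 0) ∧
  (∃ A : Finset ℂ, ∀ μ : ℂ, a μ ≠ 0 → ∃ α ∈ A, ∃ k : ℤ, μ = α + (k : ℂ)) ∧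
  (∀ (w : W) (α : ℂ), ∃ N : ℤ, ∀ k : ℤ, N ≤ k → ∀ j : ℕ, a (α + (k : ℂ)) j w = 0)

/-- `(z₁−z₂)^N [a(z₁), b(z₂)] = 0`, written coefficientwise (coefficient of
`z₁^{−μ₁} ℓ₁^{j₁} z₂^{−μ₂} ℓ₂^{j₂}`), pointwise on `W`. -/
def IsLocalOrd (a b : LogFieldData W) (N : ℕ) : Prop :=
  ∀ (μ₁ : ℂ) (j₁ : ℕ) (μ₂ : ℂ) (j₂ : ℕ) (w : W),
    ∑ i ∈ Finset.range (N + 1), ((-1 : ℤ) ^ i * (N.choose i : ℤ)) •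
      (a (μ₁ + ((N : ℂ) - (i : ℂ))) j₁ (b (μ₂ + (i : ℂ)) j₂ w)
        - b (μ₂ + (i : ℂ)) j₂ (a (μ₁ + ((N : ℂ) - (i : ℂ))) j₁ w)) = 0

/-- Two logarithmic fields are local if `(z₁−z₂)^N [a(z₁), b(z₂)] = 0` for some `N`. -/
def IsLocal (a b : LogFieldData W) : Prop := ∃ N : ℕ, IsLocalOrd a b N

/-- The derivation `D_z = ∂_z + z^{−1} ∂_ℓ`, coefficientwise. -/
noncomputable def Dz (a : LogFieldData W) : LogFieldData W := fun μ j w =>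
  ((j : ℂ) + 1) • a (μ - 1) (j + 1) w - (μ - 1) • a (μ - 1) j w

/-- The derivation `D_ℓ = z ∂_z + ∂_ℓ`, coefficientwise. -/
noncomputable def Dl (a : LogFieldData W) : LogFieldData W := fun μ j w =>
  ((j : ℂ) + 1) • a μ (j + 1) w - μ • a μ j w

/-- The derivation `∂_ℓ`, coefficientwise. -/
noncomputable def Del (a : LogFieldData W) : LogFieldData W := fun μ j w =>
  ((j : ℂ) + 1) • a μ (j + 1) w

/-- The coefficient of `z₁^{−μ₁} ℓ₁^{j₁} z₂^{−μ₂} ℓ₂^{j₂}` of `(z₁−z₂)^N a(z₁) b(z₂)`,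
pointwise on `W`. -/
noncomputable def prodCoeff (a b : LogFieldData W) (N : ℕ) :
    ℂ → ℕ → ℂ → ℕ → W → W := fun μ₁ j₁ μ₂ j₂ w =>
  ∑ i ∈ Finset.range (N + 1), ((-1 : ℤ) ^ i * (N.choose i : ℤ)) •
    a (μ₁ + ((N : ℂ) - (i : ℂ))) j₁ (b (μ₂ + (i : ℂ)) j₂ w)

/-- The derivation `D_{z₁}` on two-variable coefficient data. -/
noncomputable def Dz1 (G : ℂ → ℕ → ℂ → ℕ → W → W) :
    ℂ → ℕ → ℂ → ℕ → W → W := fun μ₁ j₁ μ₂ j₂ w =>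
  ((j₁ : ℂ) + 1) • G (μ₁ - 1) (j₁ + 1) μ₂ j₂ w - (μ₁ - 1) • G (μ₁ - 1) j₁ μ₂ j₂ w

/-- Restriction of two-variable coefficient data to the diagonal `z₁ = z₂ = z`,
`ℓ₁ = ℓ₂ = ℓ` (for fixed `w` and fixed total exponents, this is a finite sum in the
intended applications; it is computed here by `finsum`). -/
noncomputable def diagS (G : ℂ → ℕ → ℂ → ℕ → W → W) : LogFieldData W := fun μ j w =>
  ∑ j₁ ∈ Finset.range (j + 1), ∑ᶠ μ₁ : ℂ, G μ₁ j₁ (μ - μ₁) (j - j₁) w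

/-- The `n`-th product with respect to a locality order `N`:
`(a_{(n)} b)(z) w = D_{z₁}^{(N−n−1)} ((z₁−z₂)^N a(z₁) b(z₂) w)|_{z₁=z₂=z, ℓ₁=ℓ₂=ℓ}` for
`n < N`, and `0` for `n ≥ N`, where `D^{(k)} = D^k / k!`. -/
noncomputable def nProductAux (a b : LogFieldData W) (N : ℕ) (n : ℤ) : LogFieldData W :=
  if (N : ℤ) ≤ n then 0 else
    (((N - n - 1).toNat.factorial : ℂ))⁻¹ • diagS (Dz1^[(N - n - 1).toNat] (prodCoeff a b N))

/-- The `n`-th product of two local logarithmic fields, computed with the least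
admissible locality order (the result is independent of the admissible order). -/
noncomputable def nProduct (a b : LogFieldData W) (n : ℤ) : LogFieldData W :=
  nProductAux a b (sInf {N : ℕ | IsLocalOrd a b N}) n

-- ====== auxiliary development ======
open Finset Function

section BinSum
variable {M : Type*} [AddCommGroup M] [Module ℂ M]

/-- Signed binomial sum with complex scalars. -/
noncomputable def binSum (N : ℕ) (f : ℕ → M) : M :=
  ∑ i ∈ Finset.range (N + 1), ((-1 : ℂ) ^ i * (N.choose i : ℂ)) • f i

lemma binSum_congr {N : ℕ} {f g : ℕ → M} (h : ∀ i, i ≤ N → f i = g i) :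
    binSum N f = binSum N g := by
  unfold binSum
  exact Finset.sum_congr rfl fun i hi => by rw [h i (Nat.lt_succ_iff.mp (mem_range.mp hi))]

lemma binSum_sub (N : ℕ) (f g : ℕ → M) :
    binSum N (fun i => f i - g i) = binSum N f - binSum N g := by
  unfold binSum
  rw [← Finset.sum_sub_distrib]
  exact Finset.sum_congr rfl fun i _ => smul_sub _ _ _

lemma binSum_pascal (N : ℕ) (f : ℕ → M) :
    binSum (N + 1) f = binSum N f - binSum N (fun i => f (i + 1)) := by
  unfold binSum
  rw [Finset.sum_range_succ' (fun i => ((-1 : ℂ) ^ i * ((N + 1).choose i : ℂ)) • f i) (N + 1),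
    Finset.sum_range_succ' (fun i => ((-1 : ℂ) ^ i * (N.choose i : ℂ)) • f i) N]
  simp only [Nat.choose_zero_right, pow_zero, Nat.cast_one, mul_one, one_smul]
  have hsplit : ∀ i ∈ Finset.range (N + 1),
      ((-1 : ℂ) ^ (i + 1) * ((N + 1).choose (i + 1) : ℂ)) • f (i + 1)
        = ((-1 : ℂ) ^ (i + 1) * (N.choose (i + 1) : ℂ)) • f (i + 1)
          - ((-1 : ℂ) ^ i * (N.choose i : ℂ)) • f (i + 1) := by
    intro i _
    rw [Nat.choose_succ_succ, ← sub_smul]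
    congr 1
    push_cast
    ring
  rw [Finset.sum_congr rfl hsplit, Finset.sum_sub_distrib,
    Finset.sum_range_succ (fun i => ((-1 : ℂ) ^ (i + 1) * (N.choose (i + 1) : ℂ)) • f (i + 1)) N]
  simp only [Nat.choose_succ_self, Nat.cast_zero, mul_zero, zero_smul, add_zero]
  abel

end BinSum

/-- `(z₁−z₂)^N a(z₁) b(z₂)` coefficient, with complex scalars. -/
noncomputable def prodC (a b : LogFieldData W) (N : ℕ) : ℂ → ℕ → ℂ → ℕ → W → W :=
  fun μ₁ j₁ μ₂ j₂ w => binSum N fun i => a (μ₁ + ((N : ℂ) - (i : ℂ))) j₁ (b (μ₂ + (i : ℂ)) j₂ w)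

/-- `(z₁−z₂)^N b(z₂) a(z₁)` coefficient. -/
noncomputable def oppC (a b : LogFieldData W) (N : ℕ) : ℂ → ℕ → ℂ → ℕ → W → W :=
  fun μ₁ j₁ μ₂ j₂ w => binSum N fun i => b (μ₂ + (i : ℂ)) j₂ (a (μ₁ + ((N : ℂ) - (i : ℂ))) j₁ w)

lemma prodCoeff_eq (a b : LogFieldData W) (N : ℕ) : prodCoeff a b N = prodC a b N := by
  funext μ₁ j₁ μ₂ j₂ w
  unfold prodCoeff prodC binSum
  refine Finset.sum_congr rfl fun i _ => ?_
  rw [← Int.cast_smul_eq_zsmul ℂ]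
  push_cast
  ring_nf

lemma isLocalOrd_iff {a b : LogFieldData W} {N : ℕ} :
    IsLocalOrd a b N ↔ prodC a b N = oppC a b N := by
  constructor
  · intro h
    funext μ₁ j₁ μ₂ j₂ w
    have h0 := h μ₁ j₁ μ₂ j₂ w
    have : prodC a b N μ₁ j₁ μ₂ j₂ w - oppC a b N μ₁ j₁ μ₂ j₂ w = 0 := by
      rw [← h0]
      unfold prodC oppC
      rw [← binSum_sub]
      unfold binSum
      refine Finset.sum_congr rfl fun i _ => ?_
      rw [← Int.cast_smul_eq_zsmul ℂ]
      push_cast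
      ring_nf
    exact sub_eq_zero.mp this
  · intro h μ₁ j₁ μ₂ j₂ w
    have : prodC a b N μ₁ j₁ μ₂ j₂ w - oppC a b N μ₁ j₁ μ₂ j₂ w = 0 := by rw [h]; simp
    rw [← this]
    unfold prodC oppC
    rw [← binSum_sub]
    unfold binSum
    refine Finset.sum_congr rfl fun i _ => ?_
    rw [← Int.cast_smul_eq_zsmul ℂ]
    push_cast
    ring_nf

noncomputable def Tm (G : ℂ → ℕ → ℂ → ℕ → W → W) : ℂ → ℕ → ℂ → ℕ → W → W :=
  fun μ₁ j₁ μ₂ j₂ w => G (μ₁ + 1) j₁ μ₂ j₂ w - G μ₁ j₁ (μ₂ + 1) j₂ w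

noncomputable def Dz2 (G : ℂ → ℕ → ℂ → ℕ → W → W) : ℂ → ℕ → ℂ → ℕ → W → W :=
  fun μ₁ j₁ μ₂ j₂ w =>
    ((j₂ : ℂ) + 1) • G μ₁ j₁ (μ₂ - 1) (j₂ + 1) w - (μ₂ - 1) • G μ₁ j₁ (μ₂ - 1) j₂ w

noncomputable def Pd1 (G : ℂ → ℕ → ℂ → ℕ → W → W) : ℂ → ℕ → ℂ → ℕ → W → W :=
  fun μ₁ j₁ μ₂ j₂ w => ((j₁ : ℂ) + 1) • G μ₁ (j₁ + 1) μ₂ j₂ w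

noncomputable def Pd2 (G : ℂ → ℕ → ℂ → ℕ → W → W) : ℂ → ℕ → ℂ → ℕ → W → W :=
  fun μ₁ j₁ μ₂ j₂ w => ((j₂ : ℂ) + 1) • G μ₁ j₁ μ₂ (j₂ + 1) w

section OpAlgebra
variable (G G' : ℂ → ℕ → ℂ → ℕ → W → W)

lemma dz1_add : Dz1 (G + G') = Dz1 G + Dz1 G' := by
  funext μ₁ j₁ μ₂ j₂ w; simp only [Dz1, Pi.add_apply]; module

lemma dz1_sub : Dz1 (G - G') = Dz1 G - Dz1 G' := by
  funext μ₁ j₁ μ₂ j₂ w; simp only [Dz1, Pi.sub_apply]; module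

lemma dz1_smul (c : ℂ) : Dz1 (c • G) = c • Dz1 G := by
  funext μ₁ j₁ μ₂ j₂ w; simp only [Dz1, Pi.smul_apply]; module

lemma dz1_iter_add (k : ℕ) : Dz1^[k] (G + G') = Dz1^[k] G + Dz1^[k] G' := by
  induction k generalizing G G' with
  | zero => rfl
  | succ k ih =>
    simp only [Function.iterate_succ_apply, dz1_add, ih]

lemma dz1_iter_sub (k : ℕ) : Dz1^[k] (G - G') = Dz1^[k] G - Dz1^[k] G' := by
  induction k generalizing G G' with
  | zero => rfl
  | succ k ih =>
    simp only [Function.iterate_succ_apply, dz1_sub, ih]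

lemma dz1_iter_smul (c : ℂ) (k : ℕ) : Dz1^[k] (c • G) = c • Dz1^[k] G := by
  induction k generalizing G with
  | zero => rfl
  | succ k ih =>
    simp only [Function.iterate_succ_apply, dz1_smul, ih]

lemma dz1_tm : Dz1 (Tm G) = Tm (Dz1 G) + G := by
  funext μ₁ j₁ μ₂ j₂ w
  simp only [Dz1, Tm, Pi.add_apply]
  rw [show μ₁ - 1 + 1 = μ₁ from by ring, show μ₁ + 1 - 1 = μ₁ from by ring]
  module

lemma dz1_iter_tm (k : ℕ) : Dz1^[k + 1] (Tm G) = Tm (Dz1^[k + 1] G) + ((k : ℂ) + 1) • Dz1^[k] G := by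
  induction k generalizing G with
  | zero => simpa using dz1_tm G
  | succ k ih =>
    rw [Function.iterate_succ_apply, dz1_tm, dz1_iter_add, ih (Dz1 G),
      ← Function.iterate_succ_apply Dz1 (k + 1) G, ← Function.iterate_succ_apply Dz1 k G]
    push_cast
    module

lemma dz1_dz2 : Dz1 (Dz2 G) = Dz2 (Dz1 G) := by
  funext μ₁ j₁ μ₂ j₂ w; simp only [Dz1, Dz2]; module

lemma dz1_pd1 : Dz1 (Pd1 G) = Pd1 (Dz1 G) := by
  funext μ₁ j₁ μ₂ j₂ w; simp only [Dz1, Pd1]; push_cast; module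

lemma dz1_pd2 : Dz1 (Pd2 G) = Pd2 (Dz1 G) := by
  funext μ₁ j₁ μ₂ j₂ w; simp only [Dz1, Pd2]; module

lemma dz1_iter_dz2 (k : ℕ) : Dz1^[k] (Dz2 G) = Dz2 (Dz1^[k] G) := by
  induction k generalizing G with
  | zero => rfl
  | succ k ih => simp only [Function.iterate_succ_apply, dz1_dz2, ih]

lemma dz1_iter_pd1 (k : ℕ) : Dz1^[k] (Pd1 G) = Pd1 (Dz1^[k] G) := by
  induction k generalizing G with
  | zero => rfl
  | succ k ih => simp only [Function.iterate_succ_apply, dz1_pd1, ih]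

lemma dz1_iter_pd2 (k : ℕ) : Dz1^[k] (Pd2 G) = Pd2 (Dz1^[k] G) := by
  induction k generalizing G with
  | zero => rfl
  | succ k ih => simp only [Function.iterate_succ_apply, dz1_pd2, ih]

end OpAlgebra

lemma Dz_smul (c : ℂ) (f : LogFieldData W) : Dz (c • f) = c • Dz f := by
  funext μ j w; simp only [Dz, Pi.smul_apply]; module

lemma Dz_zero : Dz (0 : LogFieldData W) = 0 := by
  funext μ j w; simp [Dz]

lemma Del_smul (c : ℂ) (f : LogFieldData W) : Del (c • f) = c • Del f := by
  funext μ j w; simp only [Del, Pi.smul_apply]; module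

lemma Del_zero : Del (0 : LogFieldData W) = 0 := by
  funext μ j w; simp [Del]

lemma prodC_succ (a b : LogFieldData W) (N : ℕ) :
    prodC a b (N + 1) = Tm (prodC a b N) := by
  funext μ₁ j₁ μ₂ j₂ w
  show binSum (N + 1) _ = binSum N _ - binSum N _
  rw [binSum_pascal]
  congr 1
  · refine binSum_congr fun i _ => ?_
    rw [show μ₁ + ((↑(N + 1) : ℂ) - (i : ℂ)) = (μ₁ + 1) + ((N : ℂ) - (i : ℂ)) from by
      push_cast; ring]
  · refine binSum_congr fun i _ => ?_
    rw [show μ₁ + ((↑(N + 1) : ℂ) - (↑(i + 1) : ℂ)) = μ₁ + ((N : ℂ) - (i : ℂ)) from by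
      push_cast; ring,
      show μ₂ + (↑(i + 1) : ℂ) = (μ₂ + 1) + (i : ℂ) from by push_cast; ring]

lemma oppC_succ (a b : LogFieldData W) (N : ℕ) :
    oppC a b (N + 1) = Tm (oppC a b N) := by
  funext μ₁ j₁ μ₂ j₂ w
  show binSum (N + 1) _ = binSum N _ - binSum N _
  rw [binSum_pascal]
  congr 1
  · refine binSum_congr fun i _ => ?_
    rw [show μ₁ + ((↑(N + 1) : ℂ) - (i : ℂ)) = (μ₁ + 1) + ((N : ℂ) - (i : ℂ)) from by
      push_cast; ring]
  · refine binSum_congr fun i _ => ?_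
    rw [show μ₁ + ((↑(N + 1) : ℂ) - (↑(i + 1) : ℂ)) = μ₁ + ((N : ℂ) - (i : ℂ)) from by
      push_cast; ring,
      show μ₂ + (↑(i + 1) : ℂ) = (μ₂ + 1) + (i : ℂ) from by push_cast; ring]

lemma isLocalOrd_succ {a b : LogFieldData W} {N : ℕ} (h : IsLocalOrd a b N) :
    IsLocalOrd a b (N + 1) := by
  rw [isLocalOrd_iff] at h ⊢
  rw [prodC_succ, oppC_succ, h]

lemma isLocalOrd_mono {a b : LogFieldData W} {N M : ℕ} (h : IsLocalOrd a b N) (hNM : N ≤ M) :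
    IsLocalOrd a b M := by
  induction M, hNM using Nat.le_induction with
  | base => exact h
  | succ M _ ih => exact isLocalOrd_succ ih
/-! ### Finiteness of diagonal slices -/

def GoodC (G : ℂ → ℕ → ℂ → ℕ → W → W) : Prop :=
  ∀ (j₁ j₂ : ℕ) (w : W) (μ : ℂ), (Function.support fun μ₁ => G μ₁ j₁ (μ - μ₁) j₂ w).Finite

section Good
variable {G G' : ℂ → ℕ → ℂ → ℕ → W → W}

lemma supp_aux (hG : GoodC G) (c d : ℂ) (j₁' j₂' : ℕ) (w : W) (e₁ e₂ : ℂ → ℂ)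
    (h₁ : ∀ x, e₁ x = x + c) (h₂ : ∀ x, e₂ x = d - x) :
    (Function.support fun μ₁ => G (e₁ μ₁) j₁' (e₂ μ₁) j₂' w).Finite := by
  have key := (hG j₁' j₂' w (d + c)).preimage ((add_left_injective c).injOn)
  refine key.subset fun x hx => ?_
  simp only [Function.mem_support, Set.mem_preimage] at *
  intro h0
  apply hx
  rw [h₁ x, h₂ x, show d - x = d + c - (x + c) from by ring]
  exact h0

lemma supp_aux_smul (hG : GoodC G) (c d : ℂ) (j₁' j₂' : ℕ) (w : W) (s : ℂ → ℂ)
    (e₁ e₂ : ℂ → ℂ) (h₁ : ∀ x, e₁ x = x + c) (h₂ : ∀ x, e₂ x = d - x) :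
    (Function.support fun μ₁ => s μ₁ • G (e₁ μ₁) j₁' (e₂ μ₁) j₂' w).Finite := by
  refine (supp_aux hG c d j₁' j₂' w e₁ e₂ h₁ h₂).subset fun x hx => ?_
  simp only [Function.mem_support] at *
  intro h0
  exact hx (by rw [h0, smul_zero])

lemma GoodC.add (hG : GoodC G) (hG' : GoodC G') : GoodC (G + G') := by
  intro j₁ j₂ w μ
  refine ((hG j₁ j₂ w μ).union (hG' j₁ j₂ w μ)).subset fun x hx => ?_
  simp only [Function.mem_support, Set.mem_union] at *
  by_contra hc
  push_neg at hc
  exact hx (by simp only [Pi.add_apply]; rw [hc.1, hc.2, add_zero])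

lemma GoodC.smul (c : ℂ) (hG : GoodC G) : GoodC (c • G) := by
  intro j₁ j₂ w μ
  refine (hG j₁ j₂ w μ).subset fun x hx => ?_
  simp only [Function.mem_support] at *
  intro h0
  exact hx (by simp only [Pi.smul_apply]; rw [h0, smul_zero])

lemma GoodC.tm (hG : GoodC G) : GoodC (Tm G) := by
  intro j₁ j₂ w μ
  have h1 := supp_aux hG 1 μ j₁ j₂ w (fun x => x + 1) (fun x => μ - x)
    (fun x => rfl) (fun x => rfl)
  have h2 := supp_aux hG 0 (μ + 1) j₁ j₂ w (fun x => x) (fun x => μ - x + 1)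
    (fun x => by ring) (fun x => by ring)
  refine (h1.union h2).subset fun x hx => ?_
  simp only [Function.mem_support, Set.mem_union] at *
  by_contra hc
  push_neg at hc
  exact hx (by simp only [Tm]; rw [hc.1, hc.2, sub_zero])

lemma GoodC.dz1 (hG : GoodC G) : GoodC (Dz1 G) := by
  intro j₁ j₂ w μ
  have h1 := supp_aux_smul hG (-1) μ (j₁ + 1) j₂ w (fun _ => (j₁ : ℂ) + 1)
    (fun x => x - 1) (fun x => μ - x) (fun x => by ring) (fun x => rfl)
  have h2 := supp_aux_smul hG (-1) μ j₁ j₂ w (fun x => x - 1)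
    (fun x => x - 1) (fun x => μ - x) (fun x => by ring) (fun x => rfl)
  refine (h1.union h2).subset fun x hx => ?_
  simp only [Function.mem_support, Set.mem_union] at *
  by_contra hc
  push_neg at hc
  exact hx (by simp only [Dz1]; rw [hc.1, hc.2, sub_zero])

lemma GoodC.dz2 (hG : GoodC G) : GoodC (Dz2 G) := by
  intro j₁ j₂ w μ
  have h1 := supp_aux_smul hG 0 (μ - 1) j₁ (j₂ + 1) w (fun _ => ((j₂ : ℂ)) + 1)
    (fun x => x) (fun x => μ - x - 1) (fun x => by ring) (fun x => by ring)
  have h2 := supp_aux_smul hG 0 (μ - 1) j₁ j₂ w (fun x => μ - x - 1)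
    (fun x => x) (fun x => μ - x - 1) (fun x => by ring) (fun x => by ring)
  refine (h1.union h2).subset fun x hx => ?_
  simp only [Function.mem_support, Set.mem_union] at *
  by_contra hc
  push_neg at hc
  exact hx (by simp only [Dz2]; rw [hc.1, hc.2, sub_zero])

lemma GoodC.pd1 (hG : GoodC G) : GoodC (Pd1 G) := by
  intro j₁ j₂ w μ
  have h1 := supp_aux_smul hG 0 μ (j₁ + 1) j₂ w (fun _ => ((j₁ : ℂ)) + 1)
    (fun x => x) (fun x => μ - x) (fun x => by ring) (fun x => rfl)
  refine h1.subset fun x hx => ?_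
  simp only [Function.mem_support] at *
  intro h0
  exact hx (by simp only [Pd1]; rw [h0]) -- h0 is the smul term?
  
lemma GoodC.pd2 (hG : GoodC G) : GoodC (Pd2 G) := by
  intro j₁ j₂ w μ
  have h1 := supp_aux_smul hG 0 μ j₁ (j₂ + 1) w (fun _ => ((j₂ : ℂ)) + 1)
    (fun x => x) (fun x => μ - x) (fun x => by ring) (fun x => rfl)
  refine h1.subset fun x hx => ?_
  simp only [Function.mem_support] at *
  intro h0
  exact hx (by simp only [Pd2]; rw [h0])

lemma GoodC.iter_dz1 (hG : GoodC G) (k : ℕ) : GoodC (Dz1^[k] G) := by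
  induction k with
  | zero => exact hG
  | succ k ih => rw [Function.iterate_succ_apply']; exact ih.dz1
end Good
lemma goodC_prodC {a b : LogFieldData W} {N : ℕ} (ha : IsLogField a) (hb : IsLogField b)
    (h : IsLocalOrd a b N) : GoodC (prodC a b N) := by
  obtain ⟨haLin, -, ⟨A, hA⟩, haTr⟩ := ha
  obtain ⟨hbLin, -, -, hbTr⟩ := hb
  choose Na hNa using haTr
  choose Nb hNb using hbTr
  have hloc := isLocalOrd_iff.mp h
  intro j₁ j₂ w μ
  have hfin : (⋃ α ∈ (A : Set ℂ),
      (fun k : ℤ => α + (k : ℂ)) '' Set.Icc (-(Nb w (μ - α))) (Na w α)).Finite :=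
    A.finite_toSet.biUnion fun α _ => (Set.finite_Icc _ _).image _
  refine hfin.subset fun x hx => ?_
  rw [Function.mem_support] at hx
  have hx' : ∃ i ∈ Finset.range (N + 1),
      ((-1 : ℂ) ^ i * (N.choose i : ℂ)) •
        a (x + ((N : ℂ) - (i : ℂ))) j₁ (b ((μ - x) + (i : ℂ)) j₂ w) ≠ 0 := by
    refine Finset.exists_ne_zero_of_sum_ne_zero ?_
    exact hx
  obtain ⟨i, hi, hterm⟩ := hx'
  have hane : a (x + ((N : ℂ) - (i : ℂ))) ≠ 0 := by
    intro h0
    exact hterm (by rw [h0]; simp)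
  obtain ⟨α, hαA, k', hk'⟩ := hA _ hane
  set k : ℤ := k' - N + i with hkdef
  have hxα : x = α + (k : ℂ) := by
    push_cast [hkdef]
    linear_combination hk'
  have hupper : k ≤ Na w α := by
    by_contra hcon
    push_neg at hcon
    apply hx
    rw [hloc]
    simp only [oppC, binSum]
    refine Finset.sum_eq_zero fun i' hi' => ?_
    have hNa' : a (x + ((N : ℂ) - (i' : ℂ))) j₁ w = 0 := by
      have harg : x + ((N : ℂ) - (i' : ℂ)) = α + ((k + N - i' : ℤ) : ℂ) := by
        rw [hxα]; push_cast; ring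
      rw [harg]
      refine hNa w α _ ?_ j₁
      have hile : (i' : ℤ) ≤ N := by
        exact_mod_cast Nat.lt_succ_iff.mp (Finset.mem_range.mp hi')
      omega
    rw [hNa', (hbLin _ _).map_zero, smul_zero]
  have hlower : -(Nb w (μ - α)) ≤ k := by
    by_contra hcon
    push_neg at hcon
    apply hx
    simp only [prodC, binSum]
    refine Finset.sum_eq_zero fun i' hi' => ?_
    have hNb' : b ((μ - x) + (i' : ℂ)) j₂ w = 0 := by
      have harg : (μ - x) + (i' : ℂ) = (μ - α) + ((i' - k : ℤ) : ℂ) := by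
        rw [hxα]; push_cast; ring
      rw [harg]
      refine hNb w (μ - α) _ ?_ j₂
      have : (0 : ℤ) ≤ (i' : ℤ) := Int.natCast_nonneg i'
      omega
    rw [hNb', (haLin _ _).map_zero, smul_zero]
  exact Set.mem_biUnion hαA ⟨k, Set.mem_Icc.mpr ⟨hlower, hupper⟩, hxα.symm⟩
/-! ### diagS lemmas -/

section DiagS
variable {G G' : ℂ → ℕ → ℂ → ℕ → W → W}

lemma finsum_shift_slice (G : ℂ → ℕ → ℂ → ℕ → W → W) (k m : ℕ) (w : W) (μ : ℂ) :
    ∑ᶠ μ₁ : ℂ, G (μ₁ - 1) k (μ - μ₁) m w = ∑ᶠ μ₁ : ℂ, G μ₁ k ((μ - 1) - μ₁) m w := by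
  have hre : ∀ μ₁ : ℂ, G (μ₁ - 1) k (μ - μ₁) m w
      = (fun ν => G ν k ((μ - 1) - ν) m w) (μ₁ - 1) := by
    intro μ₁
    show _ = G (μ₁ - 1) k ((μ - 1) - (μ₁ - 1)) m w
    rw [show (μ - 1) - (μ₁ - 1) = μ - μ₁ from by ring]
  rw [finsum_congr hre]
  have h := finsum_comp_equiv (Equiv.subRight (1 : ℂ))
    (f := fun ν => G ν k ((μ - 1) - ν) m w)
  simpa using h

lemma finsum_shift_slice_smul (G : ℂ → ℕ → ℂ → ℕ → W → W) (k m : ℕ) (w : W) (μ : ℂ)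
    (s : ℂ → ℂ) :
    ∑ᶠ μ₁ : ℂ, s μ₁ • G (μ₁ - 1) k (μ - μ₁) m w
      = ∑ᶠ μ₁ : ℂ, s (μ₁ + 1) • G μ₁ k ((μ - 1) - μ₁) m w := by
  have hre : ∀ μ₁ : ℂ, s μ₁ • G (μ₁ - 1) k (μ - μ₁) m w
      = (fun ν => s (ν + 1) • G ν k ((μ - 1) - ν) m w) (μ₁ - 1) := by
    intro μ₁
    show _ = s ((μ₁ - 1) + 1) • G (μ₁ - 1) k ((μ - 1) - (μ₁ - 1)) m w
    rw [show (μ - 1) - (μ₁ - 1) = μ - μ₁ from by ring, show μ₁ - 1 + 1 = μ₁ from by ring]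
  rw [finsum_congr hre]
  have h := finsum_comp_equiv (Equiv.subRight (1 : ℂ))
    (f := fun ν => s (ν + 1) • G ν k ((μ - 1) - ν) m w)
  simpa using h

lemma diagS_add (hG : GoodC G) (hG' : GoodC G') :
    diagS (G + G') = diagS G + diagS G' := by
  funext μ j w
  simp only [diagS, Pi.add_apply]
  rw [← Finset.sum_add_distrib]
  refine Finset.sum_congr rfl fun j₁ _ => ?_
  exact finsum_add_distrib (hG j₁ (j - j₁) w μ) (hG' j₁ (j - j₁) w μ)

lemma diagS_smul (c : ℂ) (G : ℂ → ℕ → ℂ → ℕ → W → W) :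
    diagS (c • G) = c • diagS G := by
  funext μ j w
  simp only [diagS, Pi.smul_apply]
  rw [Finset.smul_sum]
  exact Finset.sum_congr rfl fun j₁ _ => (smul_finsum c _).symm

lemma diagS_tm (hG : GoodC G) : diagS (Tm G) = 0 := by
  funext μ j w
  simp only [diagS, Tm, Pi.zero_apply]
  refine Finset.sum_eq_zero fun j₁ _ => ?_
  have hsupp : (Function.support fun ν : ℂ => G ν j₁ ((μ + 1) - ν) (j - j₁) w).Finite :=
    hG j₁ (j - j₁) w (μ + 1)
  have heq : ∀ μ₁ : ℂ, G (μ₁ + 1) j₁ (μ - μ₁) (j - j₁) w - G μ₁ j₁ (μ - μ₁ + 1) (j - j₁) w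
      = (fun ν : ℂ => G ν j₁ ((μ + 1) - ν) (j - j₁) w) (μ₁ + 1)
        - (fun ν : ℂ => G ν j₁ ((μ + 1) - ν) (j - j₁) w) μ₁ := by
    intro μ₁
    show _ = G (μ₁ + 1) j₁ ((μ + 1) - (μ₁ + 1)) (j - j₁) w - G μ₁ j₁ ((μ + 1) - μ₁) (j - j₁) w
    rw [show (μ + 1) - (μ₁ + 1) = μ - μ₁ from by ring, show (μ + 1) - μ₁ = μ - μ₁ + 1 from by ring]
  rw [finsum_congr heq]
  have h1 : (Function.support fun μ₁ : ℂ =>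
      (fun ν : ℂ => G ν j₁ ((μ + 1) - ν) (j - j₁) w) (μ₁ + 1)).Finite := by
    refine (hsupp.preimage ((add_left_injective (1 : ℂ)).injOn)).subset fun x hx => hx
  have h2 : ∑ᶠ μ₁ : ℂ, (fun ν : ℂ => G ν j₁ ((μ + 1) - ν) (j - j₁) w) (μ₁ + 1)
      = ∑ᶠ ν : ℂ, G ν j₁ ((μ + 1) - ν) (j - j₁) w := by
    have h := finsum_comp_equiv (Equiv.addRight (1 : ℂ))
      (f := fun ν : ℂ => G ν j₁ ((μ + 1) - ν) (j - j₁) w)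
    simpa using h
  rw [finsum_sub_distrib h1 hsupp, h2, sub_self]

lemma sum_shiftA {M : Type*} [AddCommGroup M] [Module ℂ M] (A : ℕ → M) (j : ℕ) :
    (∑ j₁ ∈ Finset.range (j + 1),
        (((j₁ : ℂ) + 1) • A (j₁ + 1) + ((j : ℂ) - (j₁ : ℂ) + 1) • A j₁))
      = ((j : ℂ) + 1) • ∑ j₁ ∈ Finset.range (j + 2), A j₁ := by
  rw [Finset.sum_add_distrib]
  have h1 : ∑ j₁ ∈ Finset.range (j + 1), ((j₁ : ℂ) + 1) • A (j₁ + 1)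
      = ∑ j₁ ∈ Finset.range (j + 2), (j₁ : ℂ) • A j₁ := by
    rw [Finset.sum_range_succ' (fun j₁ => (j₁ : ℂ) • A j₁) (j + 1)]
    push_cast
    simp
  have h2 : ∑ j₁ ∈ Finset.range (j + 2), ((j : ℂ) - (j₁ : ℂ) + 1) • A j₁
      = ∑ j₁ ∈ Finset.range (j + 1), ((j : ℂ) - (j₁ : ℂ) + 1) • A j₁ := by
    rw [show j + 2 = (j + 1) + 1 from rfl, Finset.sum_range_succ]
    push_cast
    rw [show (j : ℂ) - ((j : ℂ) + 1) + 1 = 0 from by ring, zero_smul, add_zero]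
  rw [h1, ← h2, ← Finset.sum_add_distrib, Finset.smul_sum]
  refine Finset.sum_congr rfl fun i _ => ?_
  rw [← add_smul]
  congr 1
  ring

lemma del_diagS (hG : GoodC G) : Del (diagS G) = diagS (Pd1 G + Pd2 G) := by
  funext μ j w
  set A : ℕ → W := fun k => ∑ᶠ μ₁ : ℂ, G μ₁ k (μ - μ₁) (j + 1 - k) w with hA
  have hRHS : diagS (Pd1 G + Pd2 G) μ j w
      = ∑ j₁ ∈ Finset.range (j + 1),
          (((j₁ : ℂ) + 1) • A (j₁ + 1) + ((j : ℂ) - (j₁ : ℂ) + 1) • A j₁) := by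
    simp only [diagS, Pi.add_apply, hA]
    refine Finset.sum_congr rfl fun j₁ hj₁ => ?_
    have hj₁' : j₁ ≤ j := Nat.lt_succ_iff.mp (Finset.mem_range.mp hj₁)
    have hint : ∀ μ₁ : ℂ, Pd1 G μ₁ j₁ (μ - μ₁) (j - j₁) w + Pd2 G μ₁ j₁ (μ - μ₁) (j - j₁) w
        = ((j₁ : ℂ) + 1) • G μ₁ (j₁ + 1) (μ - μ₁) (j - j₁) w
          + ((↑(j - j₁) : ℂ) + 1) • G μ₁ j₁ (μ - μ₁) (j - j₁ + 1) w := by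
      intro μ₁
      simp only [Pd1, Pd2]
    have hs1 : (Function.support fun μ₁ : ℂ =>
        ((j₁ : ℂ) + 1) • G μ₁ (j₁ + 1) (μ - μ₁) (j - j₁) w).Finite :=
      supp_aux_smul hG 0 μ (j₁ + 1) (j - j₁) w (fun _ => (j₁ : ℂ) + 1)
        (fun x => x) (fun x => μ - x) (fun x => by ring) (fun x => rfl)
    have hs2 : (Function.support fun μ₁ : ℂ =>
        ((↑(j - j₁) : ℂ) + 1) • G μ₁ j₁ (μ - μ₁) (j - j₁ + 1) w).Finite :=
      supp_aux_smul hG 0 μ j₁ (j - j₁ + 1) w (fun _ => (↑(j - j₁) : ℂ) + 1)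
        (fun x => x) (fun x => μ - x) (fun x => by ring) (fun x => rfl)
    have harg : ∀ μ₁ : ℂ, G μ₁ j₁ (μ - μ₁) (j - j₁ + 1) w = G μ₁ j₁ (μ - μ₁) (j + 1 - j₁) w :=
      fun μ₁ => by rw [show j - j₁ + 1 = j + 1 - j₁ from by omega]
    rw [finsum_congr hint, finsum_add_distrib hs1 hs2, ← smul_finsum, ← smul_finsum,
      finsum_congr harg, show ((↑(j - j₁) : ℂ) + 1) = (j : ℂ) - (j₁ : ℂ) + 1 from by
        rw [Nat.cast_sub hj₁'],
      show j + 1 - (j₁ + 1) = j - j₁ from by omega]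
  have hdA : diagS G μ (j + 1) w = ∑ j₁ ∈ Finset.range (j + 2), A j₁ := by
    simp only [diagS, hA]
  rw [hRHS, sum_shiftA A j]
  simp only [Del]
  rw [hdA]

lemma dz_diagS (hG : GoodC G) : Dz (diagS G) = diagS (Dz1 G + Dz2 G) := by
  funext μ j w
  set A : ℕ → W := fun k => ∑ᶠ μ₁ : ℂ, G μ₁ k ((μ - 1) - μ₁) (j + 1 - k) w with hA
  set B : ℕ → W := fun k => ∑ᶠ μ₁ : ℂ, G μ₁ k ((μ - 1) - μ₁) (j - k) w with hB
  have hRHS : diagS (Dz1 G + Dz2 G) μ j w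
      = ∑ j₁ ∈ Finset.range (j + 1),
          ((((j₁ : ℂ) + 1) • A (j₁ + 1) + ((j : ℂ) - (j₁ : ℂ) + 1) • A j₁)
            - (μ - 1) • B j₁) := by
    simp only [diagS, Pi.add_apply, hA, hB]
    refine Finset.sum_congr rfl fun j₁ hj₁ => ?_
    have hj₁' : j₁ ≤ j := Nat.lt_succ_iff.mp (Finset.mem_range.mp hj₁)
    have hint : ∀ μ₁ : ℂ, Dz1 G μ₁ j₁ (μ - μ₁) (j - j₁) w + Dz2 G μ₁ j₁ (μ - μ₁) (j - j₁) w
        = (((j₁ : ℂ) + 1) • G (μ₁ - 1) (j₁ + 1) (μ - μ₁) (j - j₁) w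
            + ((↑(j - j₁) : ℂ) + 1) • G μ₁ j₁ (μ - μ₁ - 1) (j - j₁ + 1) w)
          - ((μ₁ - 1) • G (μ₁ - 1) j₁ (μ - μ₁) (j - j₁) w
            + (μ - μ₁ - 1) • G μ₁ j₁ (μ - μ₁ - 1) (j - j₁) w) := by
      intro μ₁
      simp only [Dz1, Dz2]
      abel
    have hs1 : (Function.support fun μ₁ : ℂ =>
        ((j₁ : ℂ) + 1) • G (μ₁ - 1) (j₁ + 1) (μ - μ₁) (j - j₁) w).Finite :=
      supp_aux_smul hG (-1) μ (j₁ + 1) (j - j₁) w (fun _ => (j₁ : ℂ) + 1)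
        (fun x => x - 1) (fun x => μ - x) (fun x => by ring) (fun x => rfl)
    have hs2 : (Function.support fun μ₁ : ℂ =>
        (μ₁ - 1) • G (μ₁ - 1) j₁ (μ - μ₁) (j - j₁) w).Finite :=
      supp_aux_smul hG (-1) μ j₁ (j - j₁) w (fun x => x - 1)
        (fun x => x - 1) (fun x => μ - x) (fun x => by ring) (fun x => rfl)
    have hs3 : (Function.support fun μ₁ : ℂ =>
        ((↑(j - j₁) : ℂ) + 1) • G μ₁ j₁ (μ - μ₁ - 1) (j - j₁ + 1) w).Finite :=
      supp_aux_smul hG 0 (μ - 1) j₁ (j - j₁ + 1) w (fun _ => (↑(j - j₁) : ℂ) + 1)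
        (fun x => x) (fun x => μ - x - 1) (fun x => by ring) (fun x => by ring)
    have hs4 : (Function.support fun μ₁ : ℂ =>
        (μ - μ₁ - 1) • G μ₁ j₁ (μ - μ₁ - 1) (j - j₁) w).Finite :=
      supp_aux_smul hG 0 (μ - 1) j₁ (j - j₁) w (fun x => μ - x - 1)
        (fun x => x) (fun x => μ - x - 1) (fun x => by ring) (fun x => by ring)
    have hs13 : (Function.support fun μ₁ : ℂ =>
        ((j₁ : ℂ) + 1) • G (μ₁ - 1) (j₁ + 1) (μ - μ₁) (j - j₁) w
          + ((↑(j - j₁) : ℂ) + 1) • G μ₁ j₁ (μ - μ₁ - 1) (j - j₁ + 1) w).Finite :=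
      (hs1.union hs3).subset (Function.support_add _ _)
    have hs24 : (Function.support fun μ₁ : ℂ =>
        (μ₁ - 1) • G (μ₁ - 1) j₁ (μ - μ₁) (j - j₁) w
          + (μ - μ₁ - 1) • G μ₁ j₁ (μ - μ₁ - 1) (j - j₁) w).Finite :=
      (hs2.union hs4).subset (Function.support_add _ _)
    rw [finsum_congr hint, finsum_sub_distrib hs13 hs24, finsum_add_distrib hs1 hs3,
      finsum_add_distrib hs2 hs4]
    have e1 : ∑ᶠ μ₁ : ℂ, ((j₁ : ℂ) + 1) • G (μ₁ - 1) (j₁ + 1) (μ - μ₁) (j - j₁) w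
        = ((j₁ : ℂ) + 1) • ∑ᶠ μ₁ : ℂ, G μ₁ (j₁ + 1) ((μ - 1) - μ₁) (j + 1 - (j₁ + 1)) w := by
      rw [← smul_finsum, finsum_shift_slice G (j₁ + 1) (j - j₁) w μ,
        show j + 1 - (j₁ + 1) = j - j₁ from by omega]
    have e3 : ∑ᶠ μ₁ : ℂ, ((↑(j - j₁) : ℂ) + 1) • G μ₁ j₁ (μ - μ₁ - 1) (j - j₁ + 1) w
        = ((j : ℂ) - (j₁ : ℂ) + 1) • ∑ᶠ μ₁ : ℂ, G μ₁ j₁ ((μ - 1) - μ₁) (j + 1 - j₁) w := by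
      have harg : ∀ μ₁ : ℂ, G μ₁ j₁ (μ - μ₁ - 1) (j - j₁ + 1) w
          = G μ₁ j₁ ((μ - 1) - μ₁) (j + 1 - j₁) w := fun μ₁ => by
        rw [show μ - μ₁ - 1 = (μ - 1) - μ₁ from by ring,
          show j - j₁ + 1 = j + 1 - j₁ from by omega]
      rw [← smul_finsum, finsum_congr harg,
        show ((↑(j - j₁) : ℂ) + 1) = (j : ℂ) - (j₁ : ℂ) + 1 from by rw [Nat.cast_sub hj₁']]
    have e2 : ∑ᶠ μ₁ : ℂ, (μ₁ - 1) • G (μ₁ - 1) j₁ (μ - μ₁) (j - j₁) w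
        = ∑ᶠ μ₁ : ℂ, μ₁ • G μ₁ j₁ ((μ - 1) - μ₁) (j - j₁) w := by
      rw [finsum_shift_slice_smul G j₁ (j - j₁) w μ (fun x => x - 1)]
      exact finsum_congr fun μ₁ => by rw [show μ₁ + 1 - 1 = μ₁ from by ring]
    have e4 : ∑ᶠ μ₁ : ℂ, (μ - μ₁ - 1) • G μ₁ j₁ (μ - μ₁ - 1) (j - j₁) w
        = ∑ᶠ μ₁ : ℂ, ((μ - 1) - μ₁) • G μ₁ j₁ ((μ - 1) - μ₁) (j - j₁) w :=
      finsum_congr fun μ₁ => by rw [show μ - μ₁ - 1 = (μ - 1) - μ₁ from by ring]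
    have hs2' : (Function.support fun μ₁ : ℂ =>
        μ₁ • G μ₁ j₁ ((μ - 1) - μ₁) (j - j₁) w).Finite :=
      supp_aux_smul hG 0 (μ - 1) j₁ (j - j₁) w (fun x => x)
        (fun x => x) (fun x => (μ - 1) - x) (fun x => by ring) (fun x => rfl)
    have hs4' : (Function.support fun μ₁ : ℂ =>
        ((μ - 1) - μ₁) • G μ₁ j₁ ((μ - 1) - μ₁) (j - j₁) w).Finite :=
      supp_aux_smul hG 0 (μ - 1) j₁ (j - j₁) w (fun x => (μ - 1) - x)
        (fun x => x) (fun x => (μ - 1) - x) (fun x => by ring) (fun x => rfl)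
    have e24 : ∑ᶠ μ₁ : ℂ, μ₁ • G μ₁ j₁ ((μ - 1) - μ₁) (j - j₁) w
        + ∑ᶠ μ₁ : ℂ, ((μ - 1) - μ₁) • G μ₁ j₁ ((μ - 1) - μ₁) (j - j₁) w
        = (μ - 1) • ∑ᶠ μ₁ : ℂ, G μ₁ j₁ ((μ - 1) - μ₁) (j - j₁) w := by
      have hcomb : ∀ μ₁ : ℂ, μ₁ • G μ₁ j₁ ((μ - 1) - μ₁) (j - j₁) w
          + ((μ - 1) - μ₁) • G μ₁ j₁ ((μ - 1) - μ₁) (j - j₁) w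
          = (μ - 1) • G μ₁ j₁ ((μ - 1) - μ₁) (j - j₁) w := fun μ₁ => by
        rw [← add_smul, show μ₁ + ((μ - 1) - μ₁) = μ - 1 from by ring]
      rw [← finsum_add_distrib hs2' hs4', finsum_congr hcomb]
      exact (smul_finsum _ _).symm
    rw [e1, e3, e2, e4, e24]
  have hdA : diagS G (μ - 1) (j + 1) w = ∑ j₁ ∈ Finset.range (j + 2), A j₁ := by
    simp only [diagS, hA]
  have hdB : diagS G (μ - 1) j w = ∑ j₁ ∈ Finset.range (j + 1), B j₁ := by
    simp only [diagS, hB]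
  rw [hRHS, Finset.sum_sub_distrib, sum_shiftA A j, ← Finset.smul_sum]
  simp only [Dz]
  rw [hdA, hdB]
end DiagS
/-! ### derivative identities for product coefficients -/

lemma lin_comb {f : W → W} (hf : IsLinearMap ℂ f) (c d : ℂ) (x y : W) :
    f (c • x - d • y) = c • f x - d • f y := by
  have hg : ∀ z, f z = IsLinearMap.mk' f hf z := fun z => rfl
  rw [hg (c • x - d • y), map_sub, map_smul, map_smul]
  rfl

lemma lin_smul {f : W → W} (hf : IsLinearMap ℂ f) (c : ℂ) (x : W) :
    f (c • x) = c • f x := hf.map_smul c x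

section GenDeriv
variable {F F' : ℂ → ℕ → ℂ → ℕ → W}

lemma coef_aux1 (N i : ℕ) (hi : i ≤ N + 1) :
    ((-1 : ℂ) ^ i * (((N + 1).choose i : ℕ) : ℂ)) * ((N : ℂ) + 1 - (i : ℂ))
      = ((N : ℂ) + 1) * ((-1 : ℂ) ^ i * ((N.choose i : ℕ) : ℂ)) := by
  have h := Nat.choose_mul_succ_eq N i
  have h2 := congrArg (fun t : ℕ => (t : ℂ)) h
  push_cast [Nat.cast_sub hi] at h2
  linear_combination ((-1 : ℂ) ^ i) * h2.symm

lemma coef_aux2 (N i : ℕ) :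
    ((↑(i + 1) : ℂ)) * ((-1 : ℂ) ^ (i + 1) * (((N + 1).choose (i + 1) : ℕ) : ℂ))
      = -(((N : ℂ) + 1) * ((-1 : ℂ) ^ i * ((N.choose i : ℕ) : ℂ))) := by
  have h := Nat.add_one_mul_choose_eq N i
  have h2 := congrArg (fun t : ℕ => (t : ℂ)) h
  push_cast at h2
  have hs : (-1 : ℂ) ^ (i + 1) = -(-1 : ℂ) ^ i := by rw [pow_succ]; ring
  rw [hs]
  push_cast
  linear_combination ((-1 : ℂ) ^ i) * h2

lemma gen_dz_left
    (hF : ∀ (x : ℂ) (j₁ : ℕ) (y : ℂ) (j₂ : ℕ), F' x j₁ y j₂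
      = ((j₁ : ℂ) + 1) • F (x - 1) (j₁ + 1) y j₂ - (x - 1) • F (x - 1) j₁ y j₂)
    (N : ℕ) (μ₁ : ℂ) (j₁ : ℕ) (μ₂ : ℂ) (j₂ : ℕ) :
    binSum (N + 1) (fun i => F' (μ₁ + ((↑(N + 1) : ℂ) - (i : ℂ))) j₁ (μ₂ + (i : ℂ)) j₂)
      = (((j₁ : ℂ) + 1) •
          binSum (N + 1) (fun i => F ((μ₁ - 1) + ((↑(N + 1) : ℂ) - (i : ℂ))) (j₁ + 1) (μ₂ + (i : ℂ)) j₂)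
        - (μ₁ - 1) •
          binSum (N + 1) (fun i => F ((μ₁ - 1) + ((↑(N + 1) : ℂ) - (i : ℂ))) j₁ (μ₂ + (i : ℂ)) j₂))
        - ((N : ℂ) + 1) • binSum N (fun i => F (μ₁ + ((N : ℂ) - (i : ℂ))) j₁ (μ₂ + (i : ℂ)) j₂) := by
  unfold binSum
  rw [Finset.smul_sum, Finset.smul_sum, Finset.smul_sum]
  have hpad : ∑ i ∈ Finset.range (N + 2),
        ((N : ℂ) + 1) • (((-1 : ℂ) ^ i * ((N.choose i : ℕ) : ℂ)) •
          F (μ₁ + ((N : ℂ) - (i : ℂ))) j₁ (μ₂ + (i : ℂ)) j₂)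
      = ∑ i ∈ Finset.range (N + 1),
        ((N : ℂ) + 1) • (((-1 : ℂ) ^ i * ((N.choose i : ℕ) : ℂ)) •
          F (μ₁ + ((N : ℂ) - (i : ℂ))) j₁ (μ₂ + (i : ℂ)) j₂) := by
    rw [show N + 2 = (N + 1) + 1 from rfl, Finset.sum_range_succ]
    simp [Nat.choose_succ_self]
  rw [← hpad, ← Finset.sum_sub_distrib, ← Finset.sum_sub_distrib]
  refine Finset.sum_congr rfl fun i hi => ?_
  have hi' : i ≤ N + 1 := Nat.lt_succ_iff.mp (Finset.mem_range.mp hi)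
  beta_reduce
  rw [hF]
  rw [show μ₁ + ((↑(N + 1) : ℂ) - (i : ℂ)) - 1 = μ₁ - 1 + ((↑(N + 1) : ℂ) - (i : ℂ)) from by ring,
    show μ₁ + ((N : ℂ) - (i : ℂ)) = μ₁ - 1 + ((↑(N + 1) : ℂ) - (i : ℂ)) from by push_cast; ring]
  have hc := coef_aux1 N i hi'
  match_scalars
  · ring
  · push_cast at hc ⊢
    linear_combination -hc

lemma gen_dz_right
    (hF : ∀ (x : ℂ) (j₁ : ℕ) (y : ℂ) (j₂ : ℕ), F' x j₁ y j₂
      = ((j₂ : ℂ) + 1) • F x j₁ (y - 1) (j₂ + 1) - (y - 1) • F x j₁ (y - 1) j₂)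
    (N : ℕ) (μ₁ : ℂ) (j₁ : ℕ) (μ₂ : ℂ) (j₂ : ℕ) :
    binSum (N + 1) (fun i => F' (μ₁ + ((↑(N + 1) : ℂ) - (i : ℂ))) j₁ (μ₂ + (i : ℂ)) j₂)
      = (((j₂ : ℂ) + 1) •
          binSum (N + 1) (fun i => F (μ₁ + ((↑(N + 1) : ℂ) - (i : ℂ))) j₁ ((μ₂ - 1) + (i : ℂ)) (j₂ + 1))
        - (μ₂ - 1) •
          binSum (N + 1) (fun i => F (μ₁ + ((↑(N + 1) : ℂ) - (i : ℂ))) j₁ ((μ₂ - 1) + (i : ℂ)) j₂))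
        + ((N : ℂ) + 1) • binSum N (fun i => F (μ₁ + ((N : ℂ) - (i : ℂ))) j₁ (μ₂ + (i : ℂ)) j₂) := by
  unfold binSum
  have hsplit : ∀ i ∈ Finset.range (N + 2),
      ((-1 : ℂ) ^ i * (((N + 1).choose i : ℕ) : ℂ)) •
          F' (μ₁ + ((↑(N + 1) : ℂ) - (i : ℂ))) j₁ (μ₂ + (i : ℂ)) j₂
        = (((j₂ : ℂ) + 1) • (((-1 : ℂ) ^ i * (((N + 1).choose i : ℕ) : ℂ)) •
              F (μ₁ + ((↑(N + 1) : ℂ) - (i : ℂ))) j₁ ((μ₂ - 1) + (i : ℂ)) (j₂ + 1))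
            - (μ₂ - 1) • (((-1 : ℂ) ^ i * (((N + 1).choose i : ℕ) : ℂ)) •
              F (μ₁ + ((↑(N + 1) : ℂ) - (i : ℂ))) j₁ ((μ₂ - 1) + (i : ℂ)) j₂))
          - ((i : ℂ) * ((-1 : ℂ) ^ i * (((N + 1).choose i : ℕ) : ℂ))) •
              F (μ₁ + ((↑(N + 1) : ℂ) - (i : ℂ))) j₁ ((μ₂ - 1) + (i : ℂ)) j₂ := by
    intro i _
    rw [hF, show μ₂ + (i : ℂ) - 1 = (μ₂ - 1) + (i : ℂ) from by ring]
    match_scalars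
    · ring
    · ring
  rw [Finset.sum_congr rfl hsplit, Finset.sum_sub_distrib, Finset.sum_sub_distrib,
    Finset.smul_sum, Finset.smul_sum, Finset.smul_sum]
  have hR : ∑ i ∈ Finset.range (N + 2),
        ((i : ℂ) * ((-1 : ℂ) ^ i * (((N + 1).choose i : ℕ) : ℂ))) •
          F (μ₁ + ((↑(N + 1) : ℂ) - (i : ℂ))) j₁ ((μ₂ - 1) + (i : ℂ)) j₂
      = -∑ i ∈ Finset.range (N + 1),
        ((N : ℂ) + 1) • (((-1 : ℂ) ^ i * ((N.choose i : ℕ) : ℂ)) •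
          F (μ₁ + ((N : ℂ) - (i : ℂ))) j₁ (μ₂ + (i : ℂ)) j₂) := by
    rw [Finset.sum_range_succ' (fun i => ((i : ℂ) * ((-1 : ℂ) ^ i * (((N + 1).choose i : ℕ) : ℂ))) •
          F (μ₁ + ((↑(N + 1) : ℂ) - (i : ℂ))) j₁ ((μ₂ - 1) + (i : ℂ)) j₂) (N + 1)]
    simp only [Nat.cast_zero, zero_mul, zero_smul, add_zero]
    rw [← Finset.sum_neg_distrib]
    refine Finset.sum_congr rfl fun i _ => ?_
    rw [show μ₁ + ((↑(N + 1) : ℂ) - (↑(i + 1) : ℂ)) = μ₁ + ((N : ℂ) - (i : ℂ)) from by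
        push_cast; ring,
      show (μ₂ - 1) + (↑(i + 1) : ℂ) = μ₂ + (i : ℂ) from by push_cast; ring,
      coef_aux2 N i]
    rw [neg_smul, smul_smul]
  rw [hR]
  abel
end GenDeriv

section CoeffIdent
variable {a b : LogFieldData W}

lemma prodC_dz_left (a b : LogFieldData W) (N : ℕ) :
    prodC (Dz a) b (N + 1) = Dz1 (prodC a b (N + 1)) - ((N : ℂ) + 1) • prodC a b N := by
  funext μ₁ j₁ μ₂ j₂ w
  have := gen_dz_left (F := fun x u y v => a x u (b y v w))
    (F' := fun x u y v => (Dz a) x u (b y v w)) (fun x u y v => rfl) N μ₁ j₁ μ₂ j₂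
  exact this

lemma oppC_dz_left (hb : ∀ (μ : ℂ) (j : ℕ), IsLinearMap ℂ (b μ j)) (a : LogFieldData W) (N : ℕ) :
    oppC (Dz a) b (N + 1) = Dz1 (oppC a b (N + 1)) - ((N : ℂ) + 1) • oppC a b N := by
  funext μ₁ j₁ μ₂ j₂ w
  have := gen_dz_left (F := fun x u y v => b y v (a x u w))
    (F' := fun x u y v => b y v ((Dz a) x u w))
    (fun x u y v => lin_comb (hb y v) _ _ _ _) N μ₁ j₁ μ₂ j₂
  exact this

lemma prodC_dz_right (ha : ∀ (μ : ℂ) (j : ℕ), IsLinearMap ℂ (a μ j)) (b : LogFieldData W) (N : ℕ) :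
    prodC a (Dz b) (N + 1) = Dz2 (prodC a b (N + 1)) + ((N : ℂ) + 1) • prodC a b N := by
  funext μ₁ j₁ μ₂ j₂ w
  have := gen_dz_right (F := fun x u y v => a x u (b y v w))
    (F' := fun x u y v => a x u ((Dz b) y v w))
    (fun x u y v => lin_comb (ha x u) _ _ _ _) N μ₁ j₁ μ₂ j₂
  exact this

lemma oppC_dz_right (a b : LogFieldData W) (N : ℕ) :
    oppC a (Dz b) (N + 1) = Dz2 (oppC a b (N + 1)) + ((N : ℂ) + 1) • oppC a b N := by
  funext μ₁ j₁ μ₂ j₂ w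
  have := gen_dz_right (F := fun x u y v => b y v (a x u w))
    (F' := fun x u y v => (Dz b) y v (a x u w)) (fun x u y v => rfl) N μ₁ j₁ μ₂ j₂
  exact this

lemma prodC_pd_left (a b : LogFieldData W) (N : ℕ) :
    prodC (Del a) b N = Pd1 (prodC a b N) := by
  funext μ₁ j₁ μ₂ j₂ w
  show binSum N _ = ((j₁ : ℂ) + 1) • binSum N _
  unfold binSum
  rw [Finset.smul_sum]
  refine Finset.sum_congr rfl fun i _ => ?_
  show _ • (Del a) _ j₁ _ = _
  rw [Del, smul_comm]

lemma oppC_pd_left (hb : ∀ (μ : ℂ) (j : ℕ), IsLinearMap ℂ (b μ j)) (a : LogFieldData W) (N : ℕ) :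
    oppC (Del a) b N = Pd1 (oppC a b N) := by
  funext μ₁ j₁ μ₂ j₂ w
  show binSum N _ = ((j₁ : ℂ) + 1) • binSum N _
  unfold binSum
  rw [Finset.smul_sum]
  refine Finset.sum_congr rfl fun i _ => ?_
  show _ • b _ j₂ ((Del a) _ j₁ w) = _
  rw [Del, lin_smul (hb _ _), smul_comm]

lemma prodC_pd_right (ha : ∀ (μ : ℂ) (j : ℕ), IsLinearMap ℂ (a μ j)) (b : LogFieldData W) (N : ℕ) :
    prodC a (Del b) N = Pd2 (prodC a b N) := by
  funext μ₁ j₁ μ₂ j₂ w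
  show binSum N _ = ((j₂ : ℂ) + 1) • binSum N _
  unfold binSum
  rw [Finset.smul_sum]
  refine Finset.sum_congr rfl fun i _ => ?_
  show _ • a _ j₁ ((Del b) _ j₂ w) = _
  rw [Del, lin_smul (ha _ _), smul_comm]

lemma oppC_pd_right (a b : LogFieldData W) (N : ℕ) :
    oppC a (Del b) N = Pd2 (oppC a b N) := by
  funext μ₁ j₁ μ₂ j₂ w
  show binSum N _ = ((j₂ : ℂ) + 1) • binSum N _
  unfold binSum
  rw [Finset.smul_sum]
  refine Finset.sum_congr rfl fun i _ => ?_
  show _ • (Del b) _ j₂ _ = _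
  rw [Del, smul_comm]

lemma isLocalOrd_dz_left (hb : IsLogField b) (h0 : IsLocalOrd a b N) (h1 : IsLocalOrd a b (N + 1)) :
    IsLocalOrd (Dz a) b (N + 1) := by
  rw [isLocalOrd_iff] at h0 h1 ⊢
  rw [prodC_dz_left, oppC_dz_left hb.1, h0, h1]

lemma isLocalOrd_dz_right (ha : IsLogField a) (h0 : IsLocalOrd a b N) (h1 : IsLocalOrd a b (N + 1)) :
    IsLocalOrd a (Dz b) (N + 1) := by
  rw [isLocalOrd_iff] at h0 h1 ⊢
  rw [prodC_dz_right ha.1, oppC_dz_right, h0, h1]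

lemma isLocalOrd_pd_left (hb : IsLogField b) (h0 : IsLocalOrd a b N) :
    IsLocalOrd (Del a) b N := by
  rw [isLocalOrd_iff] at h0 ⊢
  rw [prodC_pd_left, oppC_pd_left hb.1, h0]

lemma isLocalOrd_pd_right (ha : IsLogField a) (h0 : IsLocalOrd a b N) :
    IsLocalOrd a (Del b) N := by
  rw [isLocalOrd_iff] at h0 ⊢
  rw [prodC_pd_right ha.1, oppC_pd_right, h0]
end CoeffIdent
/-! ### closure of log fields under the derivations -/

lemma isLogField_dz {a : LogFieldData W} (ha : IsLogField a) : IsLogField (Dz a) := by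
  obtain ⟨hlin, hJ, ⟨A, hA⟩, htr⟩ := ha
  refine ⟨?_, ?_, ⟨A.image (· + 1), ?_⟩, ?_⟩
  · intro μ j
    constructor
    · intro x y
      simp only [Dz]
      rw [(hlin (μ - 1) (j + 1)).map_add, (hlin (μ - 1) j).map_add]
      module
    · intro c x
      simp only [Dz]
      rw [(hlin (μ - 1) (j + 1)).map_smul, (hlin (μ - 1) j).map_smul]
      module
  · intro μ
    obtain ⟨J, hJ'⟩ := hJ (μ - 1)
    refine ⟨J, fun j hj => ?_⟩
    funext w
    simp [Dz, hJ' (j + 1) (by omega), hJ' j hj]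
  · intro μ hμ
    have hne : a (μ - 1) ≠ 0 := by
      intro h0
      apply hμ
      funext j w
      simp [Dz, h0]
    obtain ⟨α, hαA, k, hk⟩ := hA _ hne
    refine ⟨α + 1, Finset.mem_image_of_mem _ hαA, k, ?_⟩
    linear_combination hk
  · intro w α
    obtain ⟨Na, hNa⟩ := htr w (α - 1)
    refine ⟨Na, fun k hk j => ?_⟩
    simp only [Dz]
    rw [show α + (k : ℂ) - 1 = (α - 1) + (k : ℂ) from by ring, hNa k hk (j + 1), hNa k hk j]
    simp

lemma isLogField_del {a : LogFieldData W} (ha : IsLogField a) : IsLogField (Del a) := by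
  obtain ⟨hlin, hJ, ⟨A, hA⟩, htr⟩ := ha
  refine ⟨?_, ?_, ⟨A, ?_⟩, ?_⟩
  · intro μ j
    constructor
    · intro x y
      simp only [Del]
      rw [(hlin μ (j + 1)).map_add]
      module
    · intro c x
      simp only [Del]
      rw [(hlin μ (j + 1)).map_smul]
      module
  · intro μ
    obtain ⟨J, hJ'⟩ := hJ μ
    refine ⟨J, fun j hj => ?_⟩
    funext w
    simp [Del, hJ' (j + 1) (by omega)]
  · intro μ hμ
    have hne : a μ ≠ 0 := by
      intro h0
      apply hμ
      funext j w
      simp [Del, h0]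
    exact hA _ hne
  · intro w α
    obtain ⟨Na, hNa⟩ := htr w α
    refine ⟨Na, fun k hk j => ?_⟩
    simp [Del, hNa k hk (j + 1)]

/-! ### diagS_sub -/

lemma diagS_sub {G G' : ℂ → ℕ → ℂ → ℕ → W → W} (hG : GoodC G) (hG' : GoodC G') :
    diagS (G - G') = diagS G - diagS G' := by
  funext μ j w
  simp only [diagS, Pi.sub_apply]
  rw [← Finset.sum_sub_distrib]
  refine Finset.sum_congr rfl fun j₁ _ => ?_
  exact finsum_sub_distrib (hG j₁ (j - j₁) w μ) (hG' j₁ (j - j₁) w μ)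

/-! ### independence of the locality order -/

lemma fact_scalar (k : ℕ) :
    ((((k + 1).factorial : ℕ) : ℂ))⁻¹ * ((k : ℂ) + 1) = (((k.factorial : ℕ) : ℂ))⁻¹ := by
  have h1 : ((k.factorial : ℕ) : ℂ) ≠ 0 := Nat.cast_ne_zero.mpr k.factorial_ne_zero
  have h2 : ((k : ℂ) + 1) ≠ 0 := Nat.cast_add_one_ne_zero k
  rw [Nat.factorial_succ]
  push_cast
  field_simp

lemma nProductAux_succ {a b : LogFieldData W} {N : ℕ} (ha : IsLogField a) (hb : IsLogField b)
    (h : IsLocalOrd a b N) (n : ℤ) :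
    nProductAux a b (N + 1) n = nProductAux a b N n := by
  have hG : GoodC (prodC a b N) := goodC_prodC ha hb h
  unfold nProductAux
  rcases lt_trichotomy n (N : ℤ) with hn | hn | hn
  · rw [if_neg (by push_cast; omega), if_neg (by omega)]
    set k := ((N : ℤ) - n - 1).toNat with hk
    have hk1 : ((↑(N + 1) : ℤ) - n - 1).toNat = k + 1 := by push_cast; omega
    rw [hk1, prodCoeff_eq a b (N + 1), prodCoeff_eq a b N, prodC_succ a b N,
      dz1_iter_tm (prodC a b N) k,
      diagS_add ((hG.iter_dz1 (k + 1)).tm) (GoodC.smul _ (hG.iter_dz1 k)),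
      diagS_tm (hG.iter_dz1 (k + 1)), diagS_smul, zero_add, smul_smul, fact_scalar k]
  · rw [if_neg (by push_cast; omega), if_pos (by omega)]
    have h0 : ((↑(N + 1) : ℤ) - n - 1).toNat = 0 := by push_cast; omega
    rw [h0]
    simp only [Nat.factorial_zero, Nat.cast_one, inv_one, one_smul, Function.iterate_zero, id_eq]
    rw [prodCoeff_eq, prodC_succ, diagS_tm hG]
  · rw [if_pos (by push_cast; omega), if_pos (by omega)]

lemma nProductAux_up {a b : LogFieldData W} {N : ℕ} (ha : IsLogField a) (hb : IsLogField b)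
    (h : IsLocalOrd a b N) (t : ℕ) (n : ℤ) :
    nProductAux a b (N + t) n = nProductAux a b N n := by
  induction t with
  | zero => rfl
  | succ t ih =>
    rw [show N + (t + 1) = (N + t) + 1 from rfl,
      nProductAux_succ ha hb (isLocalOrd_mono h (Nat.le_add_right N t)) n, ih]

lemma nProduct_eq {a b : LogFieldData W} {N : ℕ} (ha : IsLogField a) (hb : IsLogField b)
    (h : IsLocalOrd a b N) (n : ℤ) :
    nProduct a b n = nProductAux a b N n := by
  have hne : {M : ℕ | IsLocalOrd a b M}.Nonempty := ⟨N, h⟩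
  have hmem : IsLocalOrd a b (sInf {M : ℕ | IsLocalOrd a b M}) := Nat.sInf_mem hne
  unfold nProduct
  set S := sInf {M : ℕ | IsLocalOrd a b M} with hS
  have e1 : nProductAux a b (S + (max S N - S)) n = nProductAux a b S n :=
    nProductAux_up ha hb hmem _ n
  have e2 : nProductAux a b (N + (max S N - N)) n = nProductAux a b N n :=
    nProductAux_up ha hb h _ n
  rw [show S + (max S N - S) = max S N from by omega] at e1
  rw [show N + (max S N - N) = max S N from by omega] at e2
  rw [← e1, e2]
/-- For local logarithmic fields `a, b` (with `a` also local to itself) and all `n ∈ ℤ`: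
(i) `(D_z a)_{(n)} b = −n · a_{(n−1)} b`;
(ii) `D_z (a_{(n)} b) = (D_z a)_{(n)} b + a_{(n)} (D_z b)`;
(iii) `∂_ℓ (a_{(n)} b) = (∂_ℓ a)_{(n)} b + a_{(n)} (∂_ℓ b)`. -/
theorem nProduct_derivation_rules (a b : LogFieldData W)
    (ha : IsLogField a) (hb : IsLogField b) (hab : IsLocal a b) (haa : IsLocal a a)
    (n : ℤ) :
    nProduct (Dz a) b n = (-(n : ℂ)) • nProduct a b (n - 1) ∧
    Dz (nProduct a b n) = nProduct (Dz a) b n + nProduct a (Dz b) n ∧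
    Del (nProduct a b n) = nProduct (Del a) b n + nProduct a (Del b) n := by
  obtain ⟨N₀, h₀⟩ := hab
  have h₁ : IsLocalOrd a b (N₀ + 1) := isLocalOrd_succ h₀
  have haD : IsLogField (Dz a) := isLogField_dz ha
  have hbD : IsLogField (Dz b) := isLogField_dz hb
  have haL : IsLogField (Del a) := isLogField_del ha
  have hbL : IsLogField (Del b) := isLogField_del hb
  have hDzL : IsLocalOrd (Dz a) b (N₀ + 1) := isLocalOrd_dz_left hb h₀ h₁
  have hDzR : IsLocalOrd a (Dz b) (N₀ + 1) := isLocalOrd_dz_right ha h₀ h₁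
  have hPdL : IsLocalOrd (Del a) b (N₀ + 1) := isLocalOrd_pd_left hb h₁
  have hPdR : IsLocalOrd a (Del b) (N₀ + 1) := isLocalOrd_pd_right ha h₁
  have hG : GoodC (prodC a b (N₀ + 1)) := goodC_prodC ha hb h₁
  have hG0 : GoodC (prodC a b N₀) := goodC_prodC ha hb h₀
  refine ⟨?_, ?_, ?_⟩
  · -- (i)
    rw [nProduct_eq haD hb hDzL n, nProduct_eq ha hb h₁ (n - 1)]
    unfold nProductAux
    by_cases hn : ((↑(N₀ + 1) : ℤ)) ≤ n
    · rw [if_pos hn]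
      by_cases hn' : ((↑(N₀ + 1) : ℤ)) ≤ n - 1
      · rw [if_pos hn', smul_zero]
      · rw [if_neg hn']
        have h0 : ((↑(N₀ + 1) : ℤ) - (n - 1) - 1).toNat = 0 := by omega
        rw [h0]
        simp only [Nat.factorial_zero, Nat.cast_one, inv_one, one_smul,
          Function.iterate_zero, id_eq]
        rw [prodCoeff_eq, prodC_succ, diagS_tm hG0, smul_zero]
    · rw [if_neg hn, if_neg (by omega)]
      set k := ((↑(N₀ + 1) : ℤ) - n - 1).toNat with hk
      have hk1 : ((↑(N₀ + 1) : ℤ) - (n - 1) - 1).toNat = k + 1 := by omega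
      rw [hk1, prodCoeff_eq (Dz a) b, prodCoeff_eq a b, prodC_dz_left a b N₀, dz1_iter_sub,
        dz1_iter_smul, ← Function.iterate_succ_apply Dz1 k (prodC a b (N₀ + 1)),
        diagS_sub (hG.iter_dz1 (k + 1)) (GoodC.smul _ (hG0.iter_dz1 k)), diagS_smul]
      have hkey : diagS (Dz1^[k + 1] (prodC a b (N₀ + 1)))
          = ((k : ℂ) + 1) • diagS (Dz1^[k] (prodC a b N₀)) := by
        rw [prodC_succ, dz1_iter_tm,
          diagS_add ((hG0.iter_dz1 (k + 1)).tm) (GoodC.smul _ (hG0.iter_dz1 k)),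
          diagS_tm (hG0.iter_dz1 (k + 1)), diagS_smul, zero_add]
      rw [hkey]
      have hknC : (k : ℂ) = (N₀ : ℂ) - (n : ℂ) := by
        have hz : (k : ℤ) = (N₀ : ℤ) - n := by omega
        have h2 := congrArg (fun t : ℤ => (t : ℂ)) hz
        push_cast at h2
        exact h2
      rw [smul_sub, smul_smul, smul_smul, smul_smul, smul_smul, ← sub_smul]
      congr 1
      linear_combination ((n : ℂ)) * fact_scalar k + (((k.factorial : ℕ) : ℂ))⁻¹ * hknC
  · -- (ii)
    rw [nProduct_eq ha hb h₁ n, nProduct_eq haD hb hDzL n, nProduct_eq ha hbD hDzR n]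
    unfold nProductAux
    by_cases hn : ((↑(N₀ + 1) : ℤ)) ≤ n
    · simp only [if_pos hn]
      rw [Dz_zero, add_zero]
    · simp only [if_neg hn]
      set k := ((↑(N₀ + 1) : ℤ) - n - 1).toNat with hk
      rw [prodCoeff_eq a b, prodCoeff_eq (Dz a) b, prodCoeff_eq a (Dz b)]
      rw [Dz_smul, dz_diagS (hG.iter_dz1 k)]
      have hsw : Dz1 (Dz1^[k] (prodC a b (N₀ + 1))) + Dz2 (Dz1^[k] (prodC a b (N₀ + 1)))
          = Dz1^[k] (prodC (Dz a) b (N₀ + 1)) + Dz1^[k] (prodC a (Dz b) (N₀ + 1)) := by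
        rw [← Function.iterate_succ_apply' Dz1 k (prodC a b (N₀ + 1)),
          Function.iterate_succ_apply Dz1 k (prodC a b (N₀ + 1)),
          ← dz1_iter_dz2, ← dz1_iter_add, ← dz1_iter_add]
        congr 1
        rw [prodC_dz_left a b N₀, prodC_dz_right ha.1 b N₀]
        module
      rw [hsw,
        diagS_add ((goodC_prodC haD hb hDzL).iter_dz1 k) ((goodC_prodC ha hbD hDzR).iter_dz1 k),
        smul_add]
  · -- (iii)
    rw [nProduct_eq ha hb h₁ n, nProduct_eq haL hb hPdL n, nProduct_eq ha hbL hPdR n]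
    unfold nProductAux
    by_cases hn : ((↑(N₀ + 1) : ℤ)) ≤ n
    · simp only [if_pos hn]
      rw [Del_zero, add_zero]
    · simp only [if_neg hn]
      set k := ((↑(N₀ + 1) : ℤ) - n - 1).toNat with hk
      rw [prodCoeff_eq a b, prodCoeff_eq (Del a) b, prodCoeff_eq a (Del b)]
      rw [Del_smul, del_diagS (hG.iter_dz1 k)]
      have hsw : Pd1 (Dz1^[k] (prodC a b (N₀ + 1))) + Pd2 (Dz1^[k] (prodC a b (N₀ + 1)))
          = Dz1^[k] (prodC (Del a) b (N₀ + 1)) + Dz1^[k] (prodC a (Del b) (N₀ + 1)) := by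
        rw [← dz1_iter_pd1, ← dz1_iter_pd2, ← dz1_iter_add, ← dz1_iter_add]
        congr 1
        rw [prodC_pd_left a b (N₀ + 1), prodC_pd_right ha.1 b (N₀ + 1)]
      rw [hsw,
        diagS_add ((goodC_prodC haL hb hPdL).iter_dz1 k) ((goodC_prodC ha hbL hPdR).iter_dz1 k),
        smul_add]
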